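/- Let k ≥ 2 and let L ⊆ (Σ_k²)^* be accepted by a DFA with n states, where no word of L begins with the digit pair [0,0] and every word x ∈ L satisfies [π₂(x)]_k > 0. If there exists x ∈ L with [π₁(x)]_k ≥ k^n · [π₂(x)]_k, then sup { [π₁(x)]_k / [π₂(x)]_k : x ∈ L } = ∞, i.e., the set of quotients is unbounded. -/

import Mathlib

/-- The base-k value of a word of digits, most significant digit first. -/
def baseVal (k : ℕ) (w : List (Fin k)) : ℕ :=
  w.foldl (fun acc d => acc * k + d.val) 0

lemma foldl_baseVal (k : ℕ) (w : List (Fin k)) (acc : ℕ) :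
    w.foldl (fun a d => a * k + d.val) acc = acc * k ^ w.length + baseVal k w := by
  induction w generalizing acc with
  | nil => simp [baseVal]
  | cons d t ih =>
    show t.foldl _ (acc * k + d.val) = _
    rw [ih]
    have : baseVal k (d :: t) = d.val * k ^ t.length + baseVal k t := by
      show t.foldl _ (0 * k + d.val) = _
      rw [ih]; ring_nf
    rw [this]
    simp [List.length_cons, pow_succ]
    ring

lemma baseVal_append (k : ℕ) (u v : List (Fin k)) :
    baseVal k (u ++ v) = baseVal k u * k ^ v.length + baseVal k v := by
  unfold baseVal
  rw [List.foldl_append, foldl_baseVal]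
  rfl

lemma baseVal_cons (k : ℕ) (d : Fin k) (w : List (Fin k)) :
    baseVal k (d :: w) = d.val * k ^ w.length + baseVal k w := by
  have := baseVal_append k [d] w
  simpa [baseVal] using this

lemma baseVal_lt (k : ℕ) (hk : 1 ≤ k) (w : List (Fin k)) :
    baseVal k w < k ^ w.length := by
  induction w with
  | nil => simpa [baseVal]
  | cons d t ih =>
    rw [baseVal_cons]
    calc d.val * k ^ t.length + baseVal k t < d.val * k ^ t.length + k ^ t.length := by omega
    _ = (d.val + 1) * k ^ t.length := by ring
    _ ≤ k * k ^ t.length := by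
        have : d.val + 1 ≤ k := d.isLt
        exact Nat.mul_le_mul_right _ this
    _ = k ^ (d :: t).length := by rw [List.length_cons, pow_succ]; ring

set_option maxHeartbeats 1000000 in
theorem sup_quotient_infinite (k : ℕ) (hk : 2 ≤ k) (σ : Type) [Fintype σ] (n : ℕ)
    (hn : Fintype.card σ = n) (M : DFA (Fin k × Fin k) σ)
    (L : Language (Fin k × Fin k)) (hL : M.accepts = L)
    (hlead : ∀ x ∈ L, ∀ (d : Fin k × Fin k) (y : List (Fin k × Fin k)),
      x = d :: y → d.1.val ≠ 0 ∨ d.2.val ≠ 0)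
    (hpos : ∀ x ∈ L, 0 < baseVal k (x.map Prod.snd))
    (hbig : ∃ x ∈ L, k ^ n * baseVal k (x.map Prod.snd) ≤ baseVal k (x.map Prod.fst)) :
    ¬ BddAbove { r : ℝ | ∃ x ∈ L,
      r = (baseVal k (x.map Prod.fst) : ℝ) / (baseVal k (x.map Prod.snd) : ℝ) } := by
  rintro ⟨B, hB⟩
  obtain ⟨x, hxL, hx⟩ := hbig
  have hk1 : 1 ≤ k := by omega
  have hV2 : 0 < baseVal k (x.map Prod.snd) := hpos x hxL
  -- x is long
  have hxlen : n < x.length := by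
    have h1 : k ^ n ≤ baseVal k (x.map Prod.fst) :=
      le_trans (Nat.le_mul_of_pos_right _ hV2) hx
    have h2 : baseVal k (x.map Prod.fst) < k ^ x.length := by
      have := baseVal_lt k hk1 (x.map Prod.fst)
      simpa using this
    have := lt_of_le_of_lt h1 h2
    exact (pow_lt_pow_iff_right₀ (by omega : 1 < k)).mp this
  -- pumping lemma
  have hxM : x ∈ M.accepts := by rw [hL]; exact hxL
  obtain ⟨a, b, c, hxeq, hablen, hbne, hsub⟩ :=
    M.pumping_lemma hxM (by omega : Fintype.card σ ≤ x.length)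
  rw [hn] at hablen
  -- membership of pumped words
  have hmem : ∀ i, a ++ (List.replicate i b).flatten ++ c ∈ L := by
    intro i
    rw [← hL]
    apply hsub
    exact Language.append_mem_mul
      (Language.append_mem_mul rfl
        (Language.join_mem_kstar (by intro y hy; rw [List.eq_of_mem_replicate hy]; rfl)))
      rfl
  -- second coordinate of a++b has value 0
  have hzab : baseVal k ((a ++ b).map Prod.snd) = 0 := by
    by_contra h
    have h1 : 1 ≤ baseVal k ((a ++ b).map Prod.snd) := Nat.one_le_iff_ne_zero.mpr h
    have hsplit : baseVal k (x.map Prod.snd) =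
        baseVal k ((a ++ b).map Prod.snd) * k ^ c.length + baseVal k (c.map Prod.snd) := by
      rw [hxeq]
      rw [show (a ++ b ++ c).map Prod.snd = (a ++ b).map Prod.snd ++ c.map Prod.snd by simp]
      rw [baseVal_append]; simp
    have h2 : k ^ c.length ≤ baseVal k (x.map Prod.snd) := by
      rw [hsplit]
      calc k ^ c.length = 1 * k ^ c.length := (one_mul _).symm
      _ ≤ baseVal k ((a ++ b).map Prod.snd) * k ^ c.length := Nat.mul_le_mul_right _ h1
      _ ≤ _ := Nat.le_add_right _ _
    have h3 : k ^ n * k ^ c.length ≤ baseVal k (x.map Prod.fst) :=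
      le_trans (Nat.mul_le_mul_left _ h2) hx
    have h4 : baseVal k (x.map Prod.fst) < k ^ x.length := by
      simpa using baseVal_lt k hk1 (x.map Prod.fst)
    have h5 : x.length = a.length + b.length + c.length := by
      rw [hxeq]; simp; omega
    have h6 : k ^ x.length ≤ k ^ n * k ^ c.length := by
      rw [← pow_add]
      exact Nat.pow_le_pow_right (by omega) (by omega)
    omega
  -- split: both a and b have 2nd-coordinate value 0
  have hzsplit := baseVal_append k (a.map Prod.snd) (b.map Prod.snd)
  rw [show a.map Prod.snd ++ b.map Prod.snd = (a ++ b).map Prod.snd by simp, hzab] at hzsplit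
  have hza : baseVal k (a.map Prod.snd) = 0 := by
    have hkpow : 0 < k ^ (b.map Prod.snd).length := Nat.pow_pos (by omega)
    nlinarith [hzsplit.symm]
  have hzb : baseVal k (b.map Prod.snd) = 0 := by
    rw [hza] at hzsplit; simpa using hzsplit.symm
  -- flattened replicates have snd-value 0
  have hzrep : ∀ i, baseVal k ((List.replicate i b).flatten.map Prod.snd) = 0 := by
    intro i
    induction i with
    | zero => simp [baseVal]
    | succ j ih =>
      rw [List.replicate_succ, List.flatten_cons,
        show (b ++ (List.replicate j b).flatten).map Prod.snd
          = b.map Prod.snd ++ (List.replicate j b).flatten.map Prod.snd by simp,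
        baseVal_append, hzb, ih]
      simp
  -- snd-value of pumped word is constant = baseVal of c
  have hsndval : ∀ i, baseVal k ((a ++ (List.replicate i b).flatten ++ c).map Prod.snd)
      = baseVal k (c.map Prod.snd) := by
    intro i
    rw [show (a ++ (List.replicate i b).flatten ++ c).map Prod.snd
        = (a.map Prod.snd ++ (List.replicate i b).flatten.map Prod.snd) ++ c.map Prod.snd by simp,
      baseVal_append, baseVal_append, hza, hzrep]
    simp
  have hVpos : 0 < baseVal k (c.map Prod.snd) := by
    have := hpos _ (hmem 0)
    rwa [hsndval 0] at this
  -- fst-value of a ++ b is positive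
  have habne : a ++ b ≠ [] := by simp [hbne]
  obtain ⟨d, t, hdt⟩ := List.exists_cons_of_ne_nil habne
  have hd2 : d.2.val = 0 := by
    have := baseVal_cons k d.2 (t.map Prod.snd)
    rw [show (a++b).map Prod.snd = d.2 :: t.map Prod.snd by rw [hdt]; simp] at hzab
    rw [hzab] at this
    have hkpow : 0 < k ^ (t.map Prod.snd).length := Nat.pow_pos (by omega)
    nlinarith
  have hd1 : d.1.val ≠ 0 := by
    have hx' : x = d :: (t ++ c) := by rw [hxeq, hdt]; simp
    rcases hlead x hxL d (t ++ c) hx' with h | h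
    · exact h
    · exact absurd hd2 h
  have habpos : 1 ≤ baseVal k ((a ++ b).map Prod.fst) := by
    rw [show (a++b).map Prod.fst = d.1 :: t.map Prod.fst by rw [hdt]; simp, baseVal_cons]
    have : 1 ≤ d.1.val := Nat.one_le_iff_ne_zero.mpr hd1
    have hkpow : 1 ≤ k ^ (t.map Prod.fst).length := Nat.one_le_pow _ _ (by omega)
    nlinarith
  -- fst-value of pumped word grows
  have hfst : ∀ i, k ^ i ≤ baseVal k ((a ++ (List.replicate (i+1) b).flatten ++ c).map Prod.fst) := by
    intro i
    have heq : a ++ (List.replicate (i+1) b).flatten ++ c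
        = (a ++ b) ++ ((List.replicate i b).flatten ++ c) := by
      rw [List.replicate_succ, List.flatten_cons]; simp
    rw [heq, show ((a++b) ++ ((List.replicate i b).flatten ++ c)).map Prod.fst
        = (a++b).map Prod.fst ++ ((List.replicate i b).flatten ++ c).map Prod.fst by simp,
      baseVal_append]
    have hlen : i ≤ (((List.replicate i b).flatten ++ c).map Prod.fst).length := by
      simp [List.length_flatten]
      have : b.length ≥ 1 := List.length_pos_iff.mpr hbne
      calc i = i * 1 := (mul_one i).symm
      _ ≤ i * b.length := Nat.mul_le_mul_left _ this
      _ ≤ _ := by omega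
    calc k ^ i ≤ k ^ (((List.replicate i b).flatten ++ c).map Prod.fst).length :=
          Nat.pow_le_pow_right (by omega) hlen
    _ ≤ baseVal k ((a++b).map Prod.fst) * k ^ (((List.replicate i b).flatten ++ c).map Prod.fst).length := by
          exact Nat.le_mul_of_pos_left _ (by omega)
    _ ≤ _ := Nat.le_add_right _ _
  -- conclude
  set V : ℝ := (baseVal k (c.map Prod.snd) : ℝ) with hVdef
  have hVR : (0:ℝ) < V := by rw [hVdef]; exact_mod_cast hVpos
  obtain ⟨i, hi⟩ := pow_unbounded_of_one_lt (B * V) (by exact_mod_cast (by omega : 1 < k) : (1:ℝ) < k)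
  set w := a ++ (List.replicate (i+1) b).flatten ++ c with hwdef
  have hwS : (baseVal k (w.map Prod.fst) : ℝ) / (baseVal k (w.map Prod.snd) : ℝ)
      ∈ { r : ℝ | ∃ x ∈ L, r = (baseVal k (x.map Prod.fst) : ℝ) / (baseVal k (x.map Prod.snd) : ℝ) } :=
    ⟨w, hmem (i+1), rfl⟩
  have hle := hB hwS
  rw [show baseVal k (w.map Prod.snd) = baseVal k (c.map Prod.snd) from hsndval (i+1)] at hle
  have hnum : (k:ℝ) ^ i ≤ (baseVal k (w.map Prod.fst) : ℝ) := by
    exact_mod_cast hfst i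
  have h1 : (k:ℝ) ^ i / V ≤ B :=
    le_trans (by gcongr) hle
  have h2 : (k:ℝ) ^ i ≤ B * V := by
    rw [div_le_iff₀ hVR] at h1; linarith
  linarith
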